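/- Let f : [0,1] → ℝ be a 1-Lipschitz function with 0 < f(x) ≤ 1 for all x ∈ [0,1], let ε > 0, and let k ∈ ℕ be such that 2^{−k} ≤ ε · f(x) for every x ∈ [0,1]. Then inf_{x∈[0,1]} f(x) ≤ min_{0 ≤ i ≤ 2^k} f(i·2^{−k}) ≤ (1 + ε) · inf_{x∈[0,1]} f(x). -/

import Mathlib

theorem stmt_15 (f : ℝ → ℝ)
    (hlip : ∀ x ∈ Set.Icc (0:ℝ) 1, ∀ y ∈ Set.Icc (0:ℝ) 1, |f x - f y| ≤ |x - y|)
    (hpos : ∀ x ∈ Set.Icc (0:ℝ) 1, 0 < f x ∧ f x ≤ 1)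
    (ε : ℝ) (hε : 0 < ε)
    (k : ℕ) (hk : ∀ x ∈ Set.Icc (0:ℝ) 1, (2:ℝ) ^ (-(k:ℤ)) ≤ ε * f x) :
    sInf (f '' Set.Icc (0:ℝ) 1) ≤
      (⨅ i : Fin (2 ^ k + 1), f ((i : ℕ) * (2:ℝ) ^ (-(k:ℤ)))) ∧
    (⨅ i : Fin (2 ^ k + 1), f ((i : ℕ) * (2:ℝ) ^ (-(k:ℤ)))) ≤
      (1 + ε) * sInf (f '' Set.Icc (0:ℝ) 1) := by
  have hδpos : (0:ℝ) < (2:ℝ) ^ (-(k:ℤ)) := by positivity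
  have hpk : (0:ℝ) < (2:ℝ) ^ k := by positivity
  have h1 : (2:ℝ) ^ (-(k:ℤ)) * (2:ℝ) ^ k = 1 := by
    rw [← zpow_natCast (2:ℝ) k, ← zpow_add₀ (by norm_num : (2:ℝ) ≠ 0)]
    simp
  have hne : (f '' Set.Icc (0:ℝ) 1).Nonempty := ⟨f 0, 0, by norm_num, rfl⟩
  have hbdd : BddBelow (f '' Set.Icc (0:ℝ) 1) := by
    refine ⟨0, ?_⟩
    rintro y ⟨x, hx, rfl⟩
    exact (hpos x hx).1.le
  have hgrid : ∀ i : Fin (2^k+1), ((i:ℕ):ℝ) * (2:ℝ) ^ (-(k:ℤ)) ∈ Set.Icc (0:ℝ) 1 := by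
    intro i
    have hle : ((i:ℕ):ℝ) ≤ (2:ℝ)^k := by exact_mod_cast Fin.is_le i
    constructor
    · positivity
    · nlinarith
  have hrbdd : BddBelow (Set.range fun i : Fin (2^k+1) => f ((i:ℕ) * (2:ℝ) ^ (-(k:ℤ)))) :=
    (Set.finite_range _).bddBelow
  constructor
  · exact le_ciInf fun i => csInf_le hbdd ⟨_, hgrid i, rfl⟩
  · have key : ∀ x ∈ Set.Icc (0:ℝ) 1,
        (⨅ i : Fin (2^k+1), f ((i:ℕ) * (2:ℝ) ^ (-(k:ℤ)))) ≤ (1+ε) * f x := by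
      intro x hx
      have hxnn : 0 ≤ x * 2^k := mul_nonneg hx.1 hpk.le
      set n : ℕ := ⌊x * 2^k⌋₊ with hn
      have hn_le : (n:ℝ) ≤ x * 2^k := Nat.floor_le hxnn
      have hlt : x * 2^k < n + 1 := Nat.lt_floor_add_one _
      have hnle : n ≤ 2^k := by
        have : (n:ℝ) ≤ (2:ℝ)^k := hn_le.trans (by nlinarith [hx.2])
        exact_mod_cast this
      set i : Fin (2^k+1) := ⟨n, Nat.lt_succ_of_le hnle⟩ with hi
      have hdist : |(n:ℝ) * (2:ℝ) ^ (-(k:ℤ)) - x| ≤ (2:ℝ) ^ (-(k:ℤ)) := by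
        rw [abs_le]
        constructor <;> nlinarith
      have hmem := hgrid i
      simp only [hi] at hmem
      have hlipx := hlip _ hmem x hx
      have hfg : f ((n:ℝ) * (2:ℝ) ^ (-(k:ℤ))) ≤ f x + (2:ℝ) ^ (-(k:ℤ)) := by
        have := (abs_le.mp hlipx).2
        linarith [this.trans hdist]
      have hek := hk x hx
      have : f ((n:ℝ) * (2:ℝ) ^ (-(k:ℤ))) ≤ (1+ε) * f x := by linarith
      calc (⨅ i : Fin (2^k+1), f ((i:ℕ) * (2:ℝ) ^ (-(k:ℤ))))
          ≤ f ((n:ℝ) * (2:ℝ) ^ (-(k:ℤ))) := ciInf_le hrbdd i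
        _ ≤ (1+ε) * f x := this
    have h1ε : (0:ℝ) < 1 + ε := by linarith
    have hdivlb : (⨅ i : Fin (2^k+1), f ((i:ℕ) * (2:ℝ) ^ (-(k:ℤ)))) / (1+ε) ≤
        sInf (f '' Set.Icc (0:ℝ) 1) := by
      refine le_csInf hne ?_
      rintro y ⟨x, hx, rfl⟩
      exact (div_le_iff₀ h1ε).mpr (by linarith [key x hx, mul_comm (f x) (1+ε)] )
    calc (⨅ i : Fin (2^k+1), f ((i:ℕ) * (2:ℝ) ^ (-(k:ℤ))))
        = ((⨅ i : Fin (2^k+1), f ((i:ℕ) * (2:ℝ) ^ (-(k:ℤ)))) / (1+ε)) * (1+ε) := by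
          rw [div_mul_cancel₀ _ h1ε.ne']
      _ ≤ sInf (f '' Set.Icc (0:ℝ) 1) * (1+ε) := by
          exact mul_le_mul_of_nonneg_right hdivlb h1ε.le
      _ = (1+ε) * sInf (f '' Set.Icc (0:ℝ) 1) := mul_comm _ _
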